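/- Let A be a domain, C a subring of A containing a nonzero element a with aC = Ca, and suppose for every r ∈ A there exists k ∈ ℕ with r a^k ∈ aC (a is right C-seminormal in A). Then the set {a^i : i ∈ ℕ} is a right Ore set in A. -/
import Mathlib

/-- If `a` is right `C`-seminormal in the domain `A`, then the powers of `a` form a
right Ore set in `A`. -/
theorem stmt11 {A : Type*} [Ring A] [IsDomain A] (C : Subring A) (a : A)
    (ha : a ∈ C) (ha0 : a ≠ 0)
    (hnorm : {x | ∃ c ∈ C, x = a * c} = {x | ∃ c ∈ C, x = c * a})
    (hsemi : ∀ r : A, ∃ k : ℕ, ∃ c ∈ C, r * a ^ k = a * c) :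
    ∀ r : A, ∀ j : ℕ, ∃ r' : A, ∃ j' : ℕ, r * a ^ j' = a ^ j * r' := by
  intro r j
  induction j with
  | zero => exact ⟨r, 0, by simp⟩
  | succ j ih =>
    obtain ⟨r', j', h⟩ := ih
    obtain ⟨k, c, _, hc⟩ := hsemi r'
    refine ⟨c, j' + k, ?_⟩
    rw [pow_add, ← mul_assoc, h, mul_assoc, hc, pow_succ', mul_assoc, ← mul_assoc, ← mul_assoc, ← pow_succ, ← pow_succ']
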